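/- If a tree T contains an edge e = uv with deg(v) = 2 and deg(u) ≤ 2, and T' is the tree obtained from T by contracting the edge e, then pc(T) = pc(T'). -/

import Mathlib

/-- The forcing process: vertices that eventually get colored starting from `S`.
A colored vertex with exactly one uncolored neighbor forces that neighbor. -/
inductive SimpleGraph.Forced {V : Type*} (G : SimpleGraph V) (S : Set V) : V → Prop
  | init (v : V) (hv : v ∈ S) : SimpleGraph.Forced G S v
  | force (u w : V) (hu : SimpleGraph.Forced G S u) (hadj : G.Adj u w)
      (huniq : ∀ x, G.Adj u x → x ≠ w → SimpleGraph.Forced G S x) :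
      SimpleGraph.Forced G S w

/-- `S` is a zero forcing set if the forcing process colors every vertex. -/
def SimpleGraph.IsZeroForcingSet {V : Type*} (G : SimpleGraph V) (S : Set V) : Prop :=
  ∀ v, G.Forced S v

/-- The zero forcing number `Z(G)`. -/
noncomputable def SimpleGraph.zeroForcingNumber {V : Type*} (G : SimpleGraph V) : ℕ :=
  sInf {n | ∃ S : Set V, G.IsZeroForcingSet S ∧ S.ncard = n}

/-- A total forcing set: a zero forcing set inducing a subgraph without isolated vertices. -/
def SimpleGraph.IsTotalForcingSet {V : Type*} (G : SimpleGraph V) (S : Set V) : Prop :=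
  G.IsZeroForcingSet S ∧ ∀ v ∈ S, ∃ u ∈ S, G.Adj v u

/-- The total forcing number `F_t(G)`. -/
noncomputable def SimpleGraph.totalForcingNumber {V : Type*} (G : SimpleGraph V) : ℕ :=
  sInf {n | ∃ S : Set V, G.IsTotalForcingSet S ∧ S.ncard = n}

/-- A set of vertices that is the vertex set of a path (as a subgraph) of `G`. -/
def SimpleGraph.IsPathSet {V : Type*} (G : SimpleGraph V) (P : Set V) : Prop :=
  ∃ (u v : V) (w : G.Walk u v), w.IsPath ∧ {x | x ∈ w.support} = P

/-- A path cover: a collection of vertex-disjoint paths partitioning the vertex set. -/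
def SimpleGraph.IsPathCover {V : Type*} (G : SimpleGraph V) (P : Set (Set V)) : Prop :=
  (∀ Q ∈ P, G.IsPathSet Q) ∧ P.PairwiseDisjoint id ∧ ⋃₀ P = Set.univ

/-- The path cover number `pc(G)`. -/
noncomputable def SimpleGraph.pathCoverNumber {V : Type*} (G : SimpleGraph V) : ℕ :=
  sInf {n | ∃ P : Set (Set V), G.IsPathCover P ∧ P.ncard = n}

/-- The matching number `α'(G)`. -/
noncomputable def SimpleGraph.matchingNumber {V : Type*} (G : SimpleGraph V) : ℕ :=
  sSup {n | ∃ M : G.Subgraph, M.IsMatching ∧ M.edgeSet.ncard = n}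

/-- A leaf is a vertex with exactly one neighbor. -/
def SimpleGraph.IsLeaf {V : Type*} (G : SimpleGraph V) (v : V) : Prop :=
  (G.neighborSet v).ncard = 1

set_option linter.unusedSectionVars false
set_option maxHeartbeats 1000000

namespace StmtAux
open SimpleGraph Walk

variable {V : Type*}

lemma liftWalk {W : Type*} {G : SimpleGraph V} {H : SimpleGraph W} (f : V → W) :
    ∀ {a b : V} (p : G.Walk a b),
      (∀ d : G.Dart, d ∈ p.darts → H.Adj (f d.toProd.1) (f d.toProd.2)) →
      ∃ q : H.Walk (f a) (f b), q.support = p.support.map f := by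
  intro a b p
  induction p with
  | nil => exact fun _ => ⟨Walk.nil, by simp⟩
  | @cons a c b h p ih =>
    intro hd
    obtain ⟨q, hq⟩ := ih (fun d hdd => hd d (by simp [hdd]))
    exact ⟨Walk.cons (hd ⟨(a, c), h⟩ (by simp)) q, by simp [hq]⟩

variable [DecidableEq V]

def Ctr (T : SimpleGraph V) (u v : V) : SimpleGraph {x : V // x ≠ v} :=
  SimpleGraph.fromRel (fun a b => T.Adj a.1 b.1 ∨ (a.1 = u ∧ T.Adj v b.1))

structure Setup (T : SimpleGraph V) (u v w : V) : Prop where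
  htree : T.IsTree
  huv : T.Adj u v
  hvw : T.Adj v w
  hwu : w ≠ u
  hNv : T.neighborSet v = {u, w}
  hnuw : ¬ T.Adj u w
  hu2 : ∀ x y : V, T.Adj u x → T.Adj u y → x ≠ v → y ≠ v → x = y

variable {T : SimpleGraph V} {u v w : V}

abbrev Setup.u' (S : Setup T u v w) : {x : V // x ≠ v} := ⟨u, S.huv.ne⟩
abbrev Setup.w' (S : Setup T u v w) : {x : V // x ≠ v} := ⟨w, S.hvw.ne'⟩

lemma Setup.adj_v_iff (S : Setup T u v w) {x : V} : T.Adj v x ↔ x = u ∨ x = w := by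
  have : x ∈ T.neighborSet v ↔ x ∈ ({u, w} : Set V) := by rw [S.hNv]
  simpa [SimpleGraph.mem_neighborSet] using this

lemma ctr_adj (S : Setup T u v w) (a b : {x : V // x ≠ v}) :
    (Ctr T u v).Adj a b ↔
      (T.Adj a.1 b.1 ∨ (a = S.u' ∧ b = S.w') ∨ (a = S.w' ∧ b = S.u')) := by
  rw [Ctr, SimpleGraph.fromRel_adj]
  constructor
  · rintro ⟨hne, (h | ⟨hau, hb⟩) | (h | ⟨hbu, ha⟩)⟩
    · exact Or.inl h
    · rcases S.adj_v_iff.1 hb with hb' | hb'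
      · exact absurd (Subtype.ext (hau.trans hb'.symm)) hne
      · exact Or.inr (Or.inl ⟨Subtype.ext hau, Subtype.ext hb'⟩)
    · exact Or.inl h.symm
    · rcases S.adj_v_iff.1 ha with ha' | ha'
      · exact absurd (Subtype.ext (ha'.trans hbu.symm)) hne
      · exact Or.inr (Or.inr ⟨Subtype.ext ha', Subtype.ext hbu⟩)
  · rintro (h | ⟨rfl, rfl⟩ | ⟨rfl, rfl⟩)
    · exact ⟨fun he => h.ne (congrArg Subtype.val he), Or.inl (Or.inl h)⟩
    · exact ⟨fun he => S.hwu (congrArg Subtype.val he).symm, Or.inl (Or.inr ⟨rfl, S.hvw⟩)⟩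
    · exact ⟨fun he => S.hwu (congrArg Subtype.val he), Or.inr (Or.inr ⟨rfl, S.hvw⟩)⟩

lemma ctr_adj_down (S : Setup T u v w) {a b : {x : V // x ≠ v}}
    (ha : a ≠ S.u') (hb : b ≠ S.u') (h : (Ctr T u v).Adj a b) : T.Adj a.1 b.1 := by
  rcases (ctr_adj S a b).1 h with h | ⟨h1, _⟩ | ⟨_, h2⟩
  · exact h
  · exact absurd h1 ha
  · exact absurd h2 hb

lemma ctr_adj_up (S : Setup T u v w) {a b : V} (ha : a ≠ v) (hb : b ≠ v)
    (h : T.Adj a b) : (Ctr T u v).Adj ⟨a, ha⟩ ⟨b, hb⟩ :=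
  (ctr_adj S _ _).2 (Or.inl h)

lemma ctr_adj_uw (S : Setup T u v w) : (Ctr T u v).Adj S.u' S.w' :=
  (ctr_adj S _ _).2 (Or.inr (Or.inl ⟨rfl, rfl⟩))

lemma ctr_path_down (S : Setup T u v w) {a b : {x : V // x ≠ v}}
    (q : (Ctr T u v).Walk a b) (hq : S.u' ∉ q.support) (hqp : q.IsPath) :
    ∃ p : T.Walk a.1 b.1, p.IsPath ∧ p.support = q.support.map Subtype.val := by
  obtain ⟨p, hp⟩ := liftWalk (Subtype.val) q (fun d hd => by
    have h1 : d.toProd.1 ∈ q.support := Walk.dart_fst_mem_support_of_mem_darts _ hd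
    have h2 : d.toProd.2 ∈ q.support := Walk.dart_snd_mem_support_of_mem_darts _ hd
    exact ctr_adj_down S (fun h => hq (h ▸ h1)) (fun h => hq (h ▸ h2)) d.adj)
  refine ⟨p, ?_, hp⟩
  rw [Walk.isPath_def, hp]
  exact (hqp.support_nodup).map Subtype.val_injective

lemma walk_path_up (S : Setup T u v w) {a b : V}
    (q : T.Walk a b) (hq : v ∉ q.support) (hqp : q.IsPath) (ha : a ≠ v) (hb : b ≠ v) :
    ∃ p : (Ctr T u v).Walk ⟨a, ha⟩ ⟨b, hb⟩, p.IsPath ∧ p.support.map Subtype.val = q.support := by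
  classical
  set f : V → {x : V // x ≠ v} := fun x => if hx : x = v then S.u' else ⟨x, hx⟩ with hf
  have hfval : ∀ x ∈ q.support, (f x).1 = x := by
    intro x hx
    have : x ≠ v := fun h => hq (h ▸ hx)
    simp [hf, this]
  obtain ⟨p0, hp0⟩ := liftWalk f q (fun d hd => by
    have h1 : d.toProd.1 ∈ q.support := Walk.dart_fst_mem_support_of_mem_darts _ hd
    have h2 : d.toProd.2 ∈ q.support := Walk.dart_snd_mem_support_of_mem_darts _ hd
    have n1 : d.toProd.1 ≠ v := fun h => hq (h ▸ h1)
    have n2 : d.toProd.2 ≠ v := fun h => hq (h ▸ h2)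
    have := ctr_adj_up S n1 n2 d.adj
    simpa [hf, n1, n2] using this)
  have hfa : f a = ⟨a, ha⟩ := by simp [hf, ha]
  have hfb : f b = ⟨b, hb⟩ := by simp [hf, hb]
  refine ⟨p0.copy hfa hfb, ?_, ?_⟩
  · rw [Walk.isPath_def]
    simp only [Walk.support_copy, hp0]
    refine List.Nodup.map_on ?_ hqp.support_nodup
    intro x hx y hy hxy
    have := congrArg Subtype.val hxy
    rwa [hfval x hx, hfval y hy] at this
  · rw [Walk.support_copy, hp0, List.map_map]
    calc q.support.map (Subtype.val ∘ f) = q.support.map id := List.map_congr_left hfval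
    _ = q.support := List.map_id _

lemma not_v_mem_map (l : List {x : V // x ≠ v}) : v ∉ l.map Subtype.val := fun h => by
  obtain ⟨y, _, hy⟩ := List.mem_map.1 h; exact y.2 hy

lemma mem_unattach' {l : List {x : V // x ≠ v}} {x : V} :
    x ∈ l.unattach ↔ ∃ h : x ≠ v, (⟨x, h⟩ : {x : V // x ≠ v}) ∈ l := by
  constructor
  · intro h
    obtain ⟨y, hy, rfl⟩ := List.mem_map.1 h
    exact ⟨y.2, hy⟩
  · rintro ⟨h, hmem⟩
    exact List.mem_map.2 ⟨_, hmem, rfl⟩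

lemma mem_map_val_iff {l : List {x : V // x ≠ v}} {y : {x : V // x ≠ v}} :
    y.1 ∈ l.map Subtype.val ↔ y ∈ l := by
  constructor
  · intro h; obtain ⟨z, hz, hzy⟩ := List.mem_map.1 h; exact (Subtype.ext hzy : z = y) ▸ hz
  · exact fun h => List.mem_map.2 ⟨y, h, rfl⟩

lemma adj_of_ctr_first (S : Setup T u v w) {x2 : {x : V // x ≠ v}}
    (h : (Ctr T u v).Adj S.u' x2) (hx2 : x2 ≠ S.w') : T.Adj u x2.1 := by
  rcases (ctr_adj S _ _).1 h with h' | ⟨_, h2⟩ | ⟨h1, _⟩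
  · exact h'
  · exact absurd h2 hx2
  · exact absurd (congrArg Subtype.val h1) (fun hh => S.hwu hh.symm)

lemma ctrTwo (S : Setup T u v w) {a b : {x : V // x ≠ v}}
    (s1 : (Ctr T u v).Walk S.u' a) (s2 : (Ctr T u v).Walk S.u' b)
    (h1 : s1.IsPath) (h2 : s2.IsPath)
    (hdisj : ∀ x, x ∈ s1.support → x ∈ s2.support → x = S.u')
    (hgood : ∀ (_ : ¬ s1.Nil), s1.getVert 1 ≠ S.w') :
    ∃ (c d : V) (p : T.Walk c d), p.IsPath ∧
      {x | x ∈ p.support} =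
        Subtype.val '' ({x | x ∈ s1.support} ∪ {x | x ∈ s2.support}) ∪ {v} := by
  have hvu : v ≠ u := fun h => S.huv.ne h.symm
  cases s1 with
  | nil =>
    cases s2 with
    | nil =>
      refine ⟨u, v, Walk.cons S.huv Walk.nil, by simp [S.huv.ne], ?_⟩
      ext x
      simp [Setup.u', or_and_right, exists_or, mem_unattach']
      aesop
    | cons h2' q2 =>
      rename_i x2
      have hq2path : q2.IsPath := ((Walk.cons_isPath_iff _ _).1 h2).1
      have hu'q2 : S.u' ∉ q2.support := ((Walk.cons_isPath_iff _ _).1 h2).2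
      obtain ⟨t2, ht2p, ht2⟩ := ctr_path_down S q2 hu'q2 hq2path
      have hvt2 : v ∉ t2.support := ht2 ▸ not_v_mem_map _
      have hut2 : u ∉ t2.support := fun hmem => hu'q2 (mem_map_val_iff.1 (ht2 ▸ hmem))
      by_cases hx2 : x2 = S.w'
      · subst hx2
        refine ⟨u, b.1, Walk.cons S.huv (Walk.cons S.hvw t2), ?_, ?_⟩
        · exact (Walk.cons_isPath_iff _ _).2
            ⟨(Walk.cons_isPath_iff _ _).2 ⟨ht2p, hvt2⟩, by simp [S.huv.ne, hut2]⟩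
        · ext x
          simp [ht2, Setup.u', Setup.w', or_and_right, exists_or, mem_unattach']
          aesop
      · have hadj : T.Adj u x2.1 := adj_of_ctr_first S h2' hx2
        refine ⟨v, b.1, Walk.cons S.huv.symm (Walk.cons hadj t2), ?_, ?_⟩
        · rw [Walk.cons_isPath_iff, Walk.cons_isPath_iff]
          exact ⟨⟨ht2p, hut2⟩, by simp [hvu, hvt2]⟩
        · ext x
          simp [ht2, Setup.u', or_and_right, exists_or, mem_unattach']
          aesop
  | cons h1' q1 =>
    rename_i x1
    have hq1path : q1.IsPath := ((Walk.cons_isPath_iff _ _).1 h1).1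
    have hu'q1 : S.u' ∉ q1.support := ((Walk.cons_isPath_iff _ _).1 h1).2
    have hx1 : x1 ≠ S.w' := by
      have := hgood Walk.not_nil_cons
      rwa [Walk.getVert_cons_succ, Walk.getVert_zero] at this
    have hadj1 : T.Adj u x1.1 := adj_of_ctr_first S h1' hx1
    obtain ⟨t1, ht1p, ht1⟩ := ctr_path_down S q1 hu'q1 hq1path
    have hvt1 : v ∉ t1.support := ht1 ▸ not_v_mem_map _
    have hut1 : u ∉ t1.support := fun hmem => hu'q1 (mem_map_val_iff.1 (ht1 ▸ hmem))
    cases s2 with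
    | nil =>
      refine ⟨v, a.1, Walk.cons S.huv.symm (Walk.cons hadj1 t1), ?_, ?_⟩
      · rw [Walk.cons_isPath_iff, Walk.cons_isPath_iff]
        exact ⟨⟨ht1p, hut1⟩, by simp [hvu, hvt1]⟩
      · ext x
        simp [ht1, Setup.u', or_and_right, exists_or, mem_unattach']
        aesop
    | cons h2' q2 =>
      rename_i x2
      have hq2path : q2.IsPath := ((Walk.cons_isPath_iff _ _).1 h2).1
      have hu'q2 : S.u' ∉ q2.support := ((Walk.cons_isPath_iff _ _).1 h2).2
      have hx1q1 : x1 ∈ q1.support := Walk.start_mem_support _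
      have hx2q2 : x2 ∈ q2.support := Walk.start_mem_support _
      by_cases hx2 : x2 = S.w'
      · subst hx2
        obtain ⟨t2, ht2p, ht2⟩ := ctr_path_down S q2 hu'q2 hq2path
        have hvt2 : v ∉ t2.support := ht2 ▸ not_v_mem_map _
        have hut2 : u ∉ t2.support := fun hmem => hu'q2 (mem_map_val_iff.1 (ht2 ▸ hmem))
        have hdisj12 : ∀ z, z ∈ t1.support → z ∈ t2.support → False := by
          intro z hz1 hz2
          rw [ht1, List.mem_map] at hz1
          rw [ht2, List.mem_map] at hz2
          obtain ⟨y1, hy1, rfl⟩ := hz1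
          obtain ⟨y2, hy2, hval⟩ := hz2
          have hy21 : y2 = y1 := Subtype.ext hval
          rw [hy21] at hy2
          have := hdisj y1 (by simp [hy1]) (by simp [hy2])
          exact hu'q1 (this ▸ hy1)
        refine ⟨a.1, b.1,
          (Walk.cons hadj1 t1).reverse.append (Walk.cons S.huv (Walk.cons S.hvw t2)), ?_, ?_⟩
        · rw [Walk.isPath_def, Walk.support_append, Walk.support_reverse]
          rw [List.nodup_append']
          refine ⟨?_, ?_, ?_⟩
          · rw [List.nodup_reverse]
            simpa [Walk.support_cons, List.nodup_cons, hut1] using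
              (Walk.isPath_def _).1 ht1p
          · simp only [Walk.support_cons, List.tail_cons, List.nodup_cons]
            exact ⟨by simp [hvt2], ((Walk.isPath_def _).1 ht2p)⟩
          · intro z hz hz'
            simp only [List.mem_reverse, Walk.support_cons, List.mem_cons] at hz
            simp only [Walk.support_cons, List.tail_cons, List.mem_cons] at hz'
            rcases hz with rfl | hz
            · rcases hz' with rfl | hz'
              · exact S.huv.ne rfl
              · exact hut2 hz'
            · rcases hz' with rfl | hz'
              · exact hvt1 hz
              · exact hdisj12 z hz hz'
        · ext x
          rw [Walk.support_append, Walk.support_reverse]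
          simp [ht1, ht2, Setup.u', Setup.w', or_and_right, exists_or, mem_unattach']
          aesop
      · exfalso
        have hadj2 : T.Adj u x2.1 := adj_of_ctr_first S h2' hx2
        have hval : x1.1 = x2.1 := S.hu2 _ _ hadj1 hadj2 x1.2 x2.2
        have hx12 : x1 = x2 := Subtype.ext hval
        subst hx12
        have := hdisj x1 (by simp [hx1q1]) (by simp [hx2q2])
        exact hu'q1 (this ▸ hx1q1)

lemma getVert_mem_support {G : SimpleGraph V} {a b : V} (p : G.Walk a b) (n : ℕ) :
    p.getVert n ∈ p.support := by
  induction p generalizing n with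
  | nil => simp [Walk.getVert]
  | cons h q ih =>
    cases n with
    | zero => simp [Walk.getVert_zero]
    | succ n => rw [Walk.getVert_cons_succ]; simp [ih]

lemma split_at {G : SimpleGraph V} {c d : V} (p : G.Walk c d) (hp : p.IsPath)
    {z : V} (hz : z ∈ p.support) :
    ∃ (s1 : G.Walk z c) (s2 : G.Walk z d), s1.IsPath ∧ s2.IsPath ∧
      (∀ x, x ∈ s1.support → x ∈ s2.support → x = z) ∧
      (∀ x, x ∈ p.support ↔ (x ∈ s1.support ∨ x ∈ s2.support)) := by
  have hspec := p.take_spec hz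
  have hnd : (p.takeUntil z hz).support.Nodup ∧
      ((p.takeUntil z hz).support.Disjoint (p.dropUntil z hz).support.tail) := by
    have := hp.support_nodup
    rw [← hspec, Walk.support_append, List.nodup_append'] at this
    exact ⟨this.1, this.2.2⟩
  refine ⟨(p.takeUntil z hz).reverse, p.dropUntil z hz, (hp.takeUntil hz).reverse,
    hp.dropUntil hz, ?_, ?_⟩
  · intro x hx1 hx2
    rw [Walk.support_reverse, List.mem_reverse] at hx1
    rw [Walk.support_eq_cons, List.mem_cons] at hx2
    rcases hx2 with rfl | hx2
    · rfl
    · exact absurd hx2 (hnd.2 hx1)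
  · intro x
    rw [Walk.support_reverse, List.mem_reverse]
    conv_lhs => rw [← hspec]
    rw [Walk.mem_support_append_iff]

lemma up1 (S : Setup T u v w) {Q : Set {x : V // x ≠ v}}
    (hQ : (Ctr T u v).IsPathSet Q) (huQ : S.u' ∉ Q) :
    T.IsPathSet (Subtype.val '' Q) := by
  obtain ⟨c, d, p', hp', hset⟩ := hQ
  have hu' : S.u' ∉ p'.support := fun h => huQ (hset ▸ h)
  obtain ⟨p, hp, hps⟩ := ctr_path_down S p' hu' hp'
  refine ⟨c.1, d.1, p, hp, ?_⟩
  rw [← hset]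
  ext x
  simp only [Set.mem_setOf_eq, hps, List.mem_map, Set.mem_image]

lemma up2 (S : Setup T u v w) {Q : Set {x : V // x ≠ v}}
    (hQ : (Ctr T u v).IsPathSet Q) (huQ : S.u' ∈ Q) :
    T.IsPathSet (Subtype.val '' Q ∪ {v}) := by
  obtain ⟨c, d, p', hp', hset⟩ := hQ
  have hu' : S.u' ∈ p'.support := by rw [← hset] at huQ; exact huQ
  obtain ⟨s1, s2, h1, h2, hdisj, hiff⟩ := split_at p' hp' hu'
  have hQeq : ∀ (l1 l2 : List {x : V // x ≠ v}),
      (∀ x, x ∈ p'.support ↔ (x ∈ l1 ∨ x ∈ l2)) →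
      Subtype.val '' ({x | x ∈ l1} ∪ {x | x ∈ l2}) ∪ {v} = Subtype.val '' Q ∪ {v} := by
    intro l1 l2 hl
    rw [← hset]
    congr 1
    ext x
    simp only [Set.mem_union, Set.mem_setOf_eq, Set.mem_image]
    constructor
    · rintro ⟨y, hy, rfl⟩
      exact ⟨y, (hl y).2 hy, rfl⟩
    · rintro ⟨y, hy, rfl⟩
      exact ⟨y, (hl y).1 hy, rfl⟩
  by_cases hbad : ¬ s1.Nil ∧ s1.getVert 1 = S.w'
  · have hgood2 : ∀ _ : ¬ s2.Nil, s2.getVert 1 ≠ S.w' := by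
      intro hn heq
      have m1 : S.w' ∈ s1.support := hbad.2 ▸ getVert_mem_support s1 1
      have m2 : S.w' ∈ s2.support := heq ▸ getVert_mem_support s2 1
      have := hdisj _ m1 m2
      exact S.hwu (congrArg Subtype.val this)
    obtain ⟨c', d', p, hp, hps⟩ := ctrTwo S s2 s1 h2 h1 (fun x a b => hdisj x b a) hgood2
    refine ⟨c', d', p, hp, ?_⟩
    rw [hps]
    exact hQeq s2.support s1.support (fun x => (hiff x).trans or_comm)
  · have hgood1 : ∀ _ : ¬ s1.Nil, s1.getVert 1 ≠ S.w' := fun hn heq => hbad ⟨hn, heq⟩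
    obtain ⟨c', d', p, hp, hps⟩ := ctrTwo S s1 s2 h1 h2 hdisj hgood1
    refine ⟨c', d', p, hp, ?_⟩
    rw [hps]
    exact hQeq s1.support s2.support hiff

lemma down1 (S : Setup T u v w) {Q : Set V} (hQ : T.IsPathSet Q) (hvQ : v ∉ Q) :
    (Ctr T u v).IsPathSet {x | x.1 ∈ Q} := by
  obtain ⟨c, d, p, hp, hset⟩ := hQ
  have hvp : v ∉ p.support := fun h => hvQ (hset ▸ h)
  have hc : c ≠ v := fun h => hvp (h ▸ p.start_mem_support)
  have hd : d ≠ v := fun h => hvp (h ▸ p.end_mem_support)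
  obtain ⟨p', hp', hps⟩ := walk_path_up S p hvp hp hc hd
  refine ⟨_, _, p', hp', ?_⟩
  ext x
  rw [← hset]
  have : x ∈ p'.support ↔ x.1 ∈ p.support := by rw [← hps, mem_map_val_iff]
  simpa using this

lemma endpointize {G : SimpleGraph V} {Q : Set V} (hQ : G.IsPathSet Q) {z : V} (hz : z ∈ Q)
    (huniq : ∀ x y, G.Adj z x → G.Adj z y → x ∈ Q → y ∈ Q → x = y) :
    ∃ (c : V) (s : G.Walk z c), s.IsPath ∧ {x | x ∈ s.support} = Q := by
  obtain ⟨c, d, p, hp, hset⟩ := hQ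
  have hzp : z ∈ p.support := by rw [← hset] at hz; exact hz
  obtain ⟨s1, s2, h1, h2, hdisj, hiff⟩ := split_at p hp hzp
  have hQiff : ∀ x, x ∈ Q ↔ (x ∈ s1.support ∨ x ∈ s2.support) := by
    intro x; rw [← hset]; exact hiff x
  cases s1 with
  | nil =>
    refine ⟨d, s2, h2, ?_⟩
    ext x
    rw [Set.mem_setOf_eq, hQiff x]
    simp only [Walk.support_nil, List.mem_singleton]
    constructor
    · exact Or.inr
    · rintro (rfl | h)
      · exact s2.start_mem_support
      · exact h
  | cons h1' q1 =>
    rename_i x1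
    cases s2 with
    | nil =>
      refine ⟨c, Walk.cons h1' q1, h1, ?_⟩
      ext x
      rw [Set.mem_setOf_eq, hQiff x]
      simp only [Walk.support_nil, List.mem_singleton]
      constructor
      · exact Or.inl
      · rintro (h | rfl)
        · exact h
        · exact (Walk.cons h1' q1).start_mem_support
    | cons h2' q2 =>
      rename_i x2
      exfalso
      have hm1 : x1 ∈ (Walk.cons h1' q1).support := by simp [q1.start_mem_support]
      have hm2 : x2 ∈ (Walk.cons h2' q2).support := by simp [q2.start_mem_support]
      have hx12 : x1 = x2 :=
        huniq x1 x2 h1' h2' ((hQiff x1).2 (Or.inl hm1)) ((hQiff x2).2 (Or.inr hm2))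
      have hzq1 : z ∉ q1.support := ((Walk.cons_isPath_iff _ _).1 h1).2
      have : x1 = z := hdisj x1 hm1 (hx12 ▸ hm2)
      exact hzq1 (this ▸ q1.start_mem_support)

lemma downTwo (S : Setup T u v w) {a b : V} (s1 : T.Walk v a) (s2 : T.Walk v b)
    (h1 : s1.IsPath) (h2 : s2.IsPath)
    (hdisj : ∀ x, x ∈ s1.support → x ∈ s2.support → x = v)
    (hu2mem : u ∈ s2.support) :
    (Ctr T u v).IsPathSet {x | x.1 ∈ s1.support ∨ x.1 ∈ s2.support} := by
  have hu1 : u ∉ s1.support := fun h => S.huv.ne (hdisj u h hu2mem)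
  have htk : s2.takeUntil u hu2mem = Walk.cons S.huv.symm Walk.nil :=
    (S.htree.existsUnique_path v u).unique (h2.takeUntil _) (by simp [S.huv.ne'])
  have hs2 : s2 = Walk.cons S.huv.symm (s2.dropUntil u hu2mem) := by
    conv_lhs => rw [← s2.take_spec hu2mem, htk]
    simp
  set r := s2.dropUntil u hu2mem with hr
  have hcons : (Walk.cons S.huv.symm r).IsPath := hs2 ▸ h2
  have hrp : r.IsPath := ((Walk.cons_isPath_iff _ _).1 hcons).1
  have hvr : v ∉ r.support := ((Walk.cons_isPath_iff _ _).1 hcons).2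
  have hbv : b ≠ v := fun h => hvr (h ▸ r.end_mem_support)
  have hs2sup : s2.support = v :: r.support := by rw [hs2]; simp
  obtain ⟨t2, ht2p, ht2⟩ := walk_path_up S r hvr hrp S.huv.ne hbv
  have m2 : ∀ x : {x : V // x ≠ v}, x ∈ t2.support ↔ x.1 ∈ r.support := by
    intro x; rw [← ht2, mem_map_val_iff]
  cases s1 with
  | nil =>
    refine ⟨_, _, t2, ht2p, ?_⟩
    ext x
    simp only [Set.mem_setOf_eq, m2 x, hs2sup, Walk.support_nil, List.mem_singleton,
      List.mem_cons]
    have := x.2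
    tauto
  | cons h1' q1 =>
    rename_i x1
    have hx1mem : x1 ∈ (Walk.cons h1' q1).support := by simp [q1.start_mem_support]
    have hx1 : x1 = w := by
      rcases S.adj_v_iff.1 h1' with rfl | rfl
      · exact absurd hx1mem hu1
      · rfl
    subst hx1
    have hvq1 : v ∉ q1.support := ((Walk.cons_isPath_iff _ _).1 h1).2
    have hq1p : q1.IsPath := ((Walk.cons_isPath_iff _ _).1 h1).1
    have hav : a ≠ v := fun h => hvq1 (h ▸ q1.end_mem_support)
    obtain ⟨t1, ht1p, ht1⟩ := walk_path_up S q1 hvq1 hq1p S.hvw.ne' hav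
    have m1 : ∀ x : {x : V // x ≠ v}, x ∈ t1.support ↔ x.1 ∈ q1.support := by
      intro x; rw [← ht1, mem_map_val_iff]
    have hdisj' : ∀ z : V, z ∈ q1.support → z ∈ r.support → False := by
      intro z hz1 hz2
      have hz1' : z ∈ (Walk.cons h1' q1).support := by simp [hz1]
      have hz2' : z ∈ s2.support := by rw [hs2sup]; simp [hz2]
      have := hdisj z hz1' hz2'
      exact hvq1 (this ▸ hz1)
    refine ⟨_, _, t1.reverse.append (Walk.cons (ctr_adj_uw S).symm t2), ?_, ?_⟩
    · rw [Walk.isPath_def, Walk.support_append, Walk.support_reverse]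
      rw [List.nodup_append']
      refine ⟨List.nodup_reverse.2 ht1p.support_nodup, ?_, ?_⟩
      · simpa using ht2p.support_nodup
      · intro z hz hz'
        rw [List.mem_reverse, m1 z] at hz
        simp only [Walk.support_cons, List.tail_cons, m2 z] at hz'
        exact hdisj' z.1 hz hz'
    · ext x
      rw [Walk.support_append, Walk.support_reverse]
      simp only [Set.mem_setOf_eq, List.mem_append, List.mem_reverse, Walk.support_cons,
        List.tail_cons, m1 x, m2 x, hs2sup, List.mem_cons]
      have := x.2
      tauto

lemma down2 (S : Setup T u v w) {Q : Set V} (hQ : T.IsPathSet Q) (hvQ : v ∈ Q) (huQ : u ∈ Q) :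
    (Ctr T u v).IsPathSet {x | x.1 ∈ Q} := by
  obtain ⟨c, d, p, hp, hset⟩ := hQ
  have hvp : v ∈ p.support := by rw [← hset] at hvQ; exact hvQ
  have hup : u ∈ p.support := by rw [← hset] at huQ; exact huQ
  obtain ⟨s1, s2, h1, h2, hdisj, hiff⟩ := split_at p hp hvp
  have hQiff : ∀ x, x ∈ Q ↔ (x ∈ s1.support ∨ x ∈ s2.support) := by
    intro x; rw [← hset]; exact hiff x
  rcases (hiff u).1 hup with hu1 | hu2
  · obtain ⟨c', d', p', hp', hps⟩ :=
      downTwo S s2 s1 h2 h1 (fun x a b => hdisj x b a) hu1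
    refine ⟨c', d', p', hp', ?_⟩
    rw [hps]
    ext x
    simp only [Set.mem_setOf_eq, hQiff x.1]
    tauto
  · obtain ⟨c', d', p', hp', hps⟩ := downTwo S s1 s2 h1 h2 hdisj hu2
    refine ⟨c', d', p', hp', ?_⟩
    rw [hps]
    ext x
    simp only [Set.mem_setOf_eq, hQiff x.1]

lemma down3 (S : Setup T u v w) {Q1 Q2 : Set V} (h1 : T.IsPathSet Q1) (h2 : T.IsPathSet Q2)
    (hu : u ∈ Q1) (hv : v ∈ Q2) (hvQ1 : v ∉ Q1) (huQ2 : u ∉ Q2)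
    (hd : ∀ x, x ∈ Q1 → x ∈ Q2 → False) :
    (Ctr T u v).IsPathSet {x | x.1 ∈ Q1 ∪ Q2} := by
  obtain ⟨c, su, hsup, hsuset⟩ := endpointize h1 hu (by
    intro x y hx hy hxQ hyQ
    exact S.hu2 x y hx hy (fun h => hvQ1 (h ▸ hxQ)) (fun h => hvQ1 (h ▸ hyQ)))
  obtain ⟨d, sv, hsvp, hsvset⟩ := endpointize h2 hv (by
    intro x y hx hy hxQ hyQ
    rcases S.adj_v_iff.1 hx with rfl | rfl
    · exact absurd hxQ huQ2
    · rcases S.adj_v_iff.1 hy with rfl | rfl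
      · exact absurd hyQ huQ2
      · rfl)
  have hvsu : v ∉ su.support := fun h => hvQ1 (hsuset ▸ h)
  have hcv : c ≠ v := fun h => hvsu (h ▸ su.end_mem_support)
  obtain ⟨tu, htup, htu⟩ := walk_path_up S su hvsu hsup S.huv.ne hcv
  have mu : ∀ x : {x : V // x ≠ v}, x ∈ tu.support ↔ x.1 ∈ su.support := by
    intro x; rw [← htu, mem_map_val_iff]
  cases sv with
  | nil =>
    have hQ2v : Q2 = {v} := by
      rw [← hsvset]; ext x; simp
    refine ⟨_, _, tu, htup, ?_⟩
    ext x
    simp only [Set.mem_setOf_eq, mu x, Set.mem_union, hQ2v, Set.mem_singleton_iff, ← hsuset]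
    have := x.2
    tauto
  | cons hsv' qv =>
    rename_i x2
    have hx2mem : x2 ∈ (Walk.cons hsv' qv).support := by simp [qv.start_mem_support]
    have hx2Q : x2 ∈ Q2 := hsvset ▸ hx2mem
    have hx2 : x2 = w := by
      rcases S.adj_v_iff.1 hsv' with rfl | rfl
      · exact absurd hx2Q huQ2
      · rfl
    subst hx2
    have hvqv : v ∉ qv.support := ((Walk.cons_isPath_iff _ _).1 hsvp).2
    have hqvp : qv.IsPath := ((Walk.cons_isPath_iff _ _).1 hsvp).1
    have hdv : d ≠ v := fun h => hvqv (h ▸ qv.end_mem_support)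
    obtain ⟨tv, htvp, htv⟩ := walk_path_up S qv hvqv hqvp S.hvw.ne' hdv
    have mv : ∀ x : {x : V // x ≠ v}, x ∈ tv.support ↔ x.1 ∈ qv.support := by
      intro x; rw [← htv, mem_map_val_iff]
    have hsvsup : ∀ x, x ∈ Q2 ↔ (x = v ∨ x ∈ qv.support) := by
      intro x
      rw [← hsvset]
      simp only [Set.mem_setOf_eq, Walk.support_cons, List.mem_cons]
    have hdisj' : ∀ z : V, z ∈ su.support → z ∈ qv.support → False := by
      intro z hz1 hz2
      exact hd z (hsuset ▸ hz1) ((hsvsup z).2 (Or.inr hz2))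
    refine ⟨_, _, tu.reverse.append (Walk.cons (ctr_adj_uw S) tv), ?_, ?_⟩
    · rw [Walk.isPath_def, Walk.support_append, Walk.support_reverse]
      rw [List.nodup_append']
      refine ⟨List.nodup_reverse.2 htup.support_nodup, ?_, ?_⟩
      · simpa using htvp.support_nodup
      · intro z hz hz'
        rw [List.mem_reverse, mu z] at hz
        simp only [Walk.support_cons, List.tail_cons, mv z] at hz'
        exact hdisj' z.1 hz hz'
    · ext x
      rw [Walk.support_append, Walk.support_reverse]
      simp only [Set.mem_setOf_eq, List.mem_append, List.mem_reverse, Walk.support_cons,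
        List.tail_cons, mu x, mv x, Set.mem_union, ← hsuset, hsvsup x.1]
      have := x.2
      tauto

lemma sInf_le_sInf_nat {A B : Set ℕ} (hB : B.Nonempty) (h : ∀ n ∈ B, ∃ m ∈ A, m ≤ n) :
    sInf A ≤ sInf B := by
  obtain ⟨m, hmA, hm⟩ := h _ (Nat.sInf_mem hB)
  exact le_trans (Nat.sInf_le hmA) hm

lemma singleton_cover (G : SimpleGraph V) :
    G.IsPathCover (Set.range fun x => ({x} : Set V)) := by
  refine ⟨?_, ?_, ?_⟩
  · rintro Q ⟨x, rfl⟩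
    exact ⟨x, x, Walk.nil, by simp, by ext y; simp⟩
  · rintro X ⟨x, rfl⟩ Y ⟨y, rfl⟩ hne
    refine Set.disjoint_left.2 ?_
    rintro z hz hz'
    simp only [id_eq, Set.mem_singleton_iff] at hz hz'
    exact hne (by rw [← hz, hz'])
  · ext x
    simp only [Set.mem_sUnion, Set.mem_univ, iff_true]
    exact ⟨{x}, ⟨x, rfl⟩, rfl⟩

lemma cover_up [Fintype V] (S : Setup T u v w) {P' : Set (Set {x : V // x ≠ v})}
    (hP' : (Ctr T u v).IsPathCover P') :
    ∃ P : Set (Set V), T.IsPathCover P ∧ P.ncard ≤ P'.ncard := by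
  obtain ⟨hps, hpd, hun⟩ := hP'
  have hu'mem : S.u' ∈ ⋃₀ P' := by rw [hun]; trivial
  obtain ⟨Qu, hQuP, hQu⟩ := hu'mem
  have hfin : P'.Finite := Set.toFinite _
  have hQeq : ∀ Q1 ∈ P', ∀ Q2 ∈ P', ∀ x, x ∈ Q1 → x ∈ Q2 → Q1 = Q2 := by
    intro Q1 h1 Q2 h2 x hx1 hx2
    by_contra hne
    exact Set.disjoint_left.1 (hpd h1 h2 hne) hx1 hx2
  refine ⟨insert (Subtype.val '' Qu ∪ {v}) ((fun Q => Subtype.val '' Q) '' (P' \ {Qu})),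
    ⟨?_, ?_, ?_⟩, ?_⟩
  · rintro X (rfl | ⟨Q, ⟨hQ, hQne⟩, rfl⟩)
    · exact up2 S (hps Qu hQuP) hQu
    · refine up1 S (hps Q hQ) (fun hmem => hQne ?_)
      exact hQeq Q hQ Qu hQuP S.u' hmem hQu
  · rintro X (rfl | ⟨Q1, ⟨hQ1, hQ1ne⟩, rfl⟩) Y (rfl | ⟨Q2, ⟨hQ2, hQ2ne⟩, rfl⟩) hne
    · exact absurd rfl hne
    · refine Set.disjoint_left.2 ?_
      rintro z (⟨y, hy, rfl⟩ | rfl) ⟨y2, hy2, hz⟩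
      · have : y2 = y := Subtype.ext hz
        subst this
        exact hQ2ne (by rw [Set.mem_singleton_iff, hQeq Q2 hQ2 Qu hQuP y2 hy2 hy])
      · exact y2.2 hz
    · refine Set.disjoint_left.2 ?_
      rintro z ⟨y, hy, rfl⟩ (⟨y2, hy2, hz⟩ | hz)
      · have : y2 = y := Subtype.ext hz
        subst this
        exact hQ1ne (by rw [Set.mem_singleton_iff, hQeq Q1 hQ1 Qu hQuP y2 hy hy2])
      · exact y.2 hz
    · refine Set.disjoint_left.2 ?_
      rintro z ⟨y, hy, rfl⟩ ⟨y2, hy2, hz⟩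
      have : y2 = y := Subtype.ext hz
      subst this
      have : Q1 = Q2 := hQeq Q1 hQ1 Q2 hQ2 y2 hy hy2
      exact hne (by rw [this])
  · rw [Set.eq_univ_iff_forall]
    intro x
    by_cases hx : x = v
    · exact ⟨_, Set.mem_insert _ _, Or.inr (by rw [hx]; rfl)⟩
    · have : (⟨x, hx⟩ : {x : V // x ≠ v}) ∈ ⋃₀ P' := by rw [hun]; trivial
      obtain ⟨Q, hQP, hQm⟩ := this
      by_cases hQQu : Q = Qu
      · subst hQQu
        exact ⟨_, Set.mem_insert _ _, Or.inl ⟨⟨x, hx⟩, hQm, rfl⟩⟩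
      · exact ⟨Subtype.val '' Q, Set.mem_insert_of_mem _ ⟨Q, ⟨hQP, hQQu⟩, rfl⟩,
          ⟨⟨x, hx⟩, hQm, rfl⟩⟩
  · calc (insert (Subtype.val '' Qu ∪ {v}) ((fun Q => Subtype.val '' Q) '' (P' \ {Qu}))).ncard
        ≤ ((fun Q => Subtype.val '' Q) '' (P' \ {Qu})).ncard + 1 := Set.ncard_insert_le _ _
      _ ≤ (P' \ {Qu}).ncard + 1 := by
          gcongr
          exact Set.ncard_image_le hfin.diff
      _ = (P'.ncard - 1) + 1 := by rw [Set.ncard_diff_singleton_of_mem hQuP]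
      _ ≤ P'.ncard := by
          have h1 : 1 ≤ P'.ncard := (Set.ncard_pos hfin).2 ⟨Qu, hQuP⟩
          omega

lemma cover_down [Fintype V] (S : Setup T u v w) {P : Set (Set V)} (hP : T.IsPathCover P) :
    ∃ P' : Set (Set {x : V // x ≠ v}), (Ctr T u v).IsPathCover P' ∧ P'.ncard ≤ P.ncard := by
  obtain ⟨hps, hpd, hun⟩ := hP
  have hfin : P.Finite := Set.toFinite _
  have hQeq : ∀ Q1 ∈ P, ∀ Q2 ∈ P, ∀ x, x ∈ Q1 → x ∈ Q2 → Q1 = Q2 := by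
    intro Q1 h1 Q2 h2 x hx1 hx2
    by_contra hne
    exact Set.disjoint_left.1 (hpd h1 h2 hne) hx1 hx2
  have hvmem : v ∈ ⋃₀ P := by rw [hun]; trivial
  have humem : u ∈ ⋃₀ P := by rw [hun]; trivial
  obtain ⟨Qv, hQvP, hQv⟩ := hvmem
  obtain ⟨Qu, hQuP, hQu⟩ := humem
  by_cases hQQ : Qu = Qv
  · subst hQQ
    refine ⟨(fun Q => {x : {x : V // x ≠ v} | x.1 ∈ Q}) '' P, ⟨?_, ?_, ?_⟩, ?_⟩
    · rintro X ⟨Q, hQ, rfl⟩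
      by_cases hvQ : v ∈ Q
      · have : Q = Qu := hQeq Q hQ Qu hQuP v hvQ hQv
        subst this
        exact down2 S (hps Q hQ) hvQ hQu
      · exact down1 S (hps Q hQ) hvQ
    · rintro X ⟨Q1, hQ1, rfl⟩ Y ⟨Q2, hQ2, rfl⟩ hne
      refine Set.disjoint_left.2 ?_
      rintro z hz1 hz2
      exact hne (by rw [hQeq Q1 hQ1 Q2 hQ2 z.1 hz1 hz2])
    · rw [Set.eq_univ_iff_forall]
      intro x
      have : x.1 ∈ ⋃₀ P := by rw [hun]; trivial
      obtain ⟨Q, hQP, hQm⟩ := this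
      exact ⟨_, ⟨Q, hQP, rfl⟩, hQm⟩
    · exact Set.ncard_image_le hfin
  · have hvQu : v ∉ Qu := fun h => hQQ (hQeq Qu hQuP Qv hQvP v h hQv)
    have huQv : u ∉ Qv := fun h => hQQ (hQeq Qu hQuP Qv hQvP u hQu h)
    have hdisj : ∀ x, x ∈ Qu → x ∈ Qv → False := fun x h1 h2 =>
      hQQ (hQeq Qu hQuP Qv hQvP x h1 h2)
    refine ⟨insert {x : {x : V // x ≠ v} | x.1 ∈ Qu ∪ Qv}
      ((fun Q => {x : {x : V // x ≠ v} | x.1 ∈ Q}) '' (P \ {Qu, Qv})), ⟨?_, ?_, ?_⟩, ?_⟩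
    · rintro X (rfl | ⟨Q, ⟨hQ, hQne⟩, rfl⟩)
      · exact down3 S (hps Qu hQuP) (hps Qv hQvP) hQu hQv hvQu huQv hdisj
      · simp only [Set.mem_insert_iff, not_or] at hQne
        refine down1 S (hps Q hQ) (fun hmem => hQne.2 ?_)
        exact hQeq Q hQ Qv hQvP v hmem hQv
    · rintro X (rfl | ⟨Q1, ⟨hQ1, hQ1ne⟩, rfl⟩) Y (rfl | ⟨Q2, ⟨hQ2, hQ2ne⟩, rfl⟩) hne
      · exact absurd rfl hne
      · simp only [Set.mem_insert_iff, not_or] at hQ2ne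
        refine Set.disjoint_left.2 ?_
        rintro z hz1 hz2
        rcases hz1 with h | h
        · exact hQ2ne.1 (hQeq Q2 hQ2 Qu hQuP z.1 hz2 h)
        · exact hQ2ne.2 (hQeq Q2 hQ2 Qv hQvP z.1 hz2 h)
      · simp only [Set.mem_insert_iff, not_or] at hQ1ne
        refine Set.disjoint_left.2 ?_
        rintro z hz1 hz2
        rcases hz2 with h | h
        · exact hQ1ne.1 (hQeq Q1 hQ1 Qu hQuP z.1 hz1 h)
        · exact hQ1ne.2 (hQeq Q1 hQ1 Qv hQvP z.1 hz1 h)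
      · refine Set.disjoint_left.2 ?_
        rintro z hz1 hz2
        exact hne (by rw [hQeq Q1 hQ1 Q2 hQ2 z.1 hz1 hz2])
    · rw [Set.eq_univ_iff_forall]
      intro x
      have : x.1 ∈ ⋃₀ P := by rw [hun]; trivial
      obtain ⟨Q, hQP, hQm⟩ := this
      by_cases h1 : Q = Qu
      · exact ⟨_, Set.mem_insert _ _, Or.inl (h1 ▸ hQm)⟩
      · by_cases h2 : Q = Qv
        · exact ⟨_, Set.mem_insert _ _, Or.inr (h2 ▸ hQm)⟩
        · exact ⟨_, Set.mem_insert_of_mem _ ⟨Q, ⟨hQP, by simp [h1, h2]⟩, rfl⟩, hQm⟩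
    · have hsub : ({Qu, Qv} : Set (Set V)) ⊆ P := by
        rintro Q (rfl | rfl)
        · exact hQuP
        · exact hQvP
      have h2card : ({Qu, Qv} : Set (Set V)).ncard = 2 := Set.ncard_pair hQQ
      have h2le : 2 ≤ P.ncard := by
        have := Set.ncard_le_ncard hsub hfin
        omega
      calc (insert {x : {x : V // x ≠ v} | x.1 ∈ Qu ∪ Qv}
          ((fun Q => {x : {x : V // x ≠ v} | x.1 ∈ Q}) '' (P \ {Qu, Qv}))).ncard
          ≤ ((fun Q => {x : {x : V // x ≠ v} | x.1 ∈ Q}) '' (P \ {Qu, Qv})).ncard + 1 :=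
            Set.ncard_insert_le _ _
        _ ≤ (P \ {Qu, Qv}).ncard + 1 := by
            gcongr
            exact Set.ncard_image_le hfin.diff
        _ = (P.ncard - 2) + 1 := by rw [Set.ncard_diff hsub (hfin.subset hsub), h2card]
        _ ≤ P.ncard := by omega

end StmtAux

theorem stmt8 {V : Type*} [Fintype V] [DecidableEq V] (T : SimpleGraph V)
    (hT : T.IsTree) (u v : V) (huv : T.Adj u v)
    (hv : (T.neighborSet v).ncard = 2) (hu : (T.neighborSet u).ncard ≤ 2) :
    T.pathCoverNumber =
      (SimpleGraph.fromRel (fun a b : {x : V // x ≠ v} =>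
        T.Adj a.1 b.1 ∨ (a.1 = u ∧ T.Adj v b.1))).pathCoverNumber := by
  classical
  have humem : u ∈ T.neighborSet v := huv.symm
  obtain ⟨a, b, hab, hNv⟩ := Set.ncard_eq_two.1 hv
  obtain ⟨w, hwu, hNv'⟩ : ∃ w, w ≠ u ∧ T.neighborSet v = {u, w} := by
    rw [hNv] at humem
    rcases humem with rfl | rfl
    · exact ⟨b, Ne.symm hab, hNv⟩
    · exact ⟨a, hab, by rw [hNv, Set.pair_comm]⟩
  have hvw : T.Adj v w := by
    have : w ∈ T.neighborSet v := by rw [hNv']; exact Or.inr rfl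
    exact this
  have hu2 : ∀ x y : V, T.Adj u x → T.Adj u y → x ≠ v → y ≠ v → x = y := by
    intro x y hx hy hxv hyv
    by_contra hxy
    have hsub : ({v, x, y} : Set V) ⊆ T.neighborSet u := by
      rintro z (rfl | rfl | rfl)
      · exact huv
      · exact hx
      · exact hy
    have h3 : ({v, x, y} : Set V).ncard = 3 := by
      rw [Set.ncard_insert_of_notMem (by simp [Ne.symm hxv, Ne.symm hyv]) (Set.toFinite _),
        Set.ncard_pair hxy]
    have := Set.ncard_le_ncard hsub (Set.toFinite _)
    omega
  have hnuw : ¬ T.Adj u w := by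
    intro h
    have h1 : (SimpleGraph.Walk.cons h SimpleGraph.Walk.nil : T.Walk u w).IsPath := by
      simp [h.ne]
    have h2 : (SimpleGraph.Walk.cons huv (SimpleGraph.Walk.cons hvw SimpleGraph.Walk.nil) :
        T.Walk u w).IsPath := by
      simp [huv.ne, hvw.ne, h.ne]
    have heq := (hT.existsUnique_path u w).unique h1 h2
    have := congrArg SimpleGraph.Walk.length heq
    simp at this
  have S : StmtAux.Setup T u v w := ⟨hT, huv, hvw, hwu, hNv', hnuw, hu2⟩
  have hctr : (SimpleGraph.fromRel (fun a b : {x : V // x ≠ v} =>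
      T.Adj a.1 b.1 ∨ (a.1 = u ∧ T.Adj v b.1))) = StmtAux.Ctr T u v := rfl
  rw [hctr]
  rw [SimpleGraph.pathCoverNumber, SimpleGraph.pathCoverNumber]
  apply le_antisymm
  · apply StmtAux.sInf_le_sInf_nat
    · exact ⟨_, ⟨_, StmtAux.singleton_cover _, rfl⟩⟩
    · rintro n ⟨P', hP', rfl⟩
      obtain ⟨P, hP, hle⟩ := StmtAux.cover_up S hP'
      exact ⟨P.ncard, ⟨P, hP, rfl⟩, hle⟩
  · apply StmtAux.sInf_le_sInf_nat
    · exact ⟨_, ⟨_, StmtAux.singleton_cover _, rfl⟩⟩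
    · rintro n ⟨P, hP, rfl⟩
      obtain ⟨P', hP', hle⟩ := StmtAux.cover_down S hP
      exact ⟨P'.ncard, ⟨P', hP', rfl⟩, hle⟩
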